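/- Let C be an [n,k]-linear code over F_q with k ≥ 2. If d_p^{k-1}(C) = d_p^k(C), then d_H^k(C) = n, i.e., the Hamming support of C is all of {0,...,n-1}. -/

import Mathlib

/-- The pair support of a subspace `D ≤ F^n` (indices mod `n`). -/
def pairSupport {F : Type*} [Field F] {n : ℕ} [NeZero n] (D : Submodule F (Fin n → F)) :
    Set (Fin n) :=
  {i | ∃ x ∈ D, x i ≠ 0 ∨ x (i + 1) ≠ 0}

/-- The `r`-minimal pair weight `d_p^r(C)` of a linear code `C ≤ F^n`. -/
noncomputable def dp {F : Type*} [Field F] {n : ℕ} [NeZero n]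
    (C : Submodule F (Fin n → F)) (r : ℕ) : ℕ :=
  sInf {m | ∃ D : Submodule F (Fin n → F), D ≤ C ∧ Module.finrank F D = r ∧
    (pairSupport D).ncard = m}

/-- The Hamming support of a subspace `D ≤ F^n`. -/
def hammingSupport {F : Type*} [Field F] {n : ℕ} (D : Submodule F (Fin n → F)) : Set (Fin n) :=
  {i | ∃ x ∈ D, x i ≠ 0}

open Fin.NatCast Fin.CommRing in
lemma chain_univ {n : ℕ} [NeZero n] (χ : Set (Fin n))
    (hstep : ∀ i, i ∈ χ → i + 1 ∈ χ) {i : Fin n} (hi : i ∈ χ) :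
    χ = Set.univ := by
  have key : ∀ m : ℕ, i + (m : Fin n) ∈ χ := by
    intro m
    induction m with
    | zero => simpa using hi
    | succ m ih =>
      have h1 : ((m + 1 : ℕ) : Fin n) = (m : Fin n) + 1 := by push_cast; ring
      rw [h1, ← add_assoc]
      exact hstep _ ih
  ext j
  simp only [Set.mem_univ, iff_true]
  have := key (j - i).val
  rwa [Fin.cast_val_eq_self, add_comm, sub_add_cancel] at this

theorem dHk_eq_n_of_dp_eq {F : Type*} [Field F] [Fintype F] {n k : ℕ} [NeZero n]
    (C : Submodule F (Fin n → F)) (hC : Module.finrank F C = k) (hk : 2 ≤ k)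
    (h : dp C (k - 1) = dp C k) :
    (hammingSupport C).ncard = n := by
  classical
  suffices hu : hammingSupport C = Set.univ by
    rw [hu, Set.ncard_univ, Nat.card_eq_fintype_card, Fintype.card_fin]
  by_contra hne
  -- the support is nonempty
  have hC0 : C ≠ ⊥ := by
    intro hbot
    rw [hbot, finrank_bot] at hC
    omega
  obtain ⟨x, hxC, hx0⟩ := Submodule.exists_mem_ne_zero_of_ne_bot hC0
  obtain ⟨i0, hi0⟩ := Function.ne_iff.mp hx0
  have hi0χ : i0 ∈ hammingSupport C := ⟨x, hxC, by simpa using hi0⟩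
  -- find i in the support with i+1 not in the support
  have hex : ∃ i : Fin n, i ∈ hammingSupport C ∧ i + 1 ∉ hammingSupport C := by
    by_contra hall
    push_neg at hall
    exact hne (chain_univ _ hall hi0χ)
  obtain ⟨i, hiχ, hi1χ⟩ := hex
  obtain ⟨y, hyC, hyi⟩ := hiχ
  -- evaluation functional at i on C
  set f : C →ₗ[F] F := (LinearMap.proj i).comp C.subtype with hf
  have hsurj : Function.Surjective f := by
    intro b
    refine ⟨(b / y i) • ⟨y, hyC⟩, ?_⟩
    simp only [hf, LinearMap.comp_apply, LinearMap.proj_apply, map_smul]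
    simp [Submodule.coe_smul, div_mul_cancel₀ b hyi]
  set D : Submodule F (Fin n → F) := (LinearMap.ker f).map C.subtype with hD
  have hDle : D ≤ C := Submodule.map_subtype_le _ _
  have hDrank : Module.finrank F D = k - 1 := by
    have hrn := LinearMap.finrank_range_add_finrank_ker f
    have hrange : LinearMap.range f = ⊤ := LinearMap.range_eq_top.mpr hsurj
    rw [hrange, finrank_top, Module.finrank_self, hC] at hrn
    rw [hD, Submodule.finrank_map_subtype_eq]
    omega
  -- membership facts about D
  have hDmem : ∀ z ∈ D, z ∈ C ∧ z i = 0 := by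
    intro z hz
    rw [hD, Submodule.mem_map] at hz
    obtain ⟨c, hc, rfl⟩ := hz
    rw [LinearMap.mem_ker] at hc
    exact ⟨c.2, hc⟩
  -- pair supports
  have hiD : i ∉ pairSupport D := by
    rintro ⟨z, hz, hor⟩
    obtain ⟨hzC, hzi⟩ := hDmem z hz
    rcases hor with h1 | h2
    · exact h1 hzi
    · exact hi1χ ⟨z, hzC, h2⟩
  have hiC : i ∈ pairSupport C := ⟨y, hyC, Or.inl hyi⟩
  have hssub : pairSupport D ⊂ pairSupport C := by
    constructor
    · rintro j ⟨z, hz, hor⟩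
      exact ⟨z, hDle hz, hor⟩
    · intro hsub
      exact hiD (hsub hiC)
  have hlt : (pairSupport D).ncard < (pairSupport C).ncard :=
    Set.ncard_lt_ncard hssub (Set.toFinite _)
  have h1 : dp C (k - 1) ≤ (pairSupport D).ncard :=
    Nat.sInf_le ⟨D, hDle, hDrank, rfl⟩
  have h2 : dp C k = (pairSupport C).ncard := by
    have hset : {m | ∃ D' : Submodule F (Fin n → F), D' ≤ C ∧ Module.finrank F D' = k ∧
        (pairSupport D').ncard = m} = {(pairSupport C).ncard} := by
      ext m
      constructor
      · rintro ⟨D', hle, hr, rfl⟩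
        have hDC : D' = C :=
          Submodule.eq_of_le_of_finrank_le hle (le_of_eq (hC.trans hr.symm))
        rw [hDC]
        rfl
      · rintro rfl
        exact ⟨C, le_refl C, hC, rfl⟩
    rw [dp, hset, csInf_singleton]
  omega
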